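/- Suppose A N = N, let α ∈ ℝ, and let S : T → T be a real-linear map on T := {Y ∈ V : g(Y,N) = 0} that is g-symmetric and satisfies Sξ = αξ (Hopf shape operator). Define R̄_N, R_ξ : T → T by R̄_N Y := Y + 2η(Y)ξ + A Y and R_ξ Y := Y - 2η(Y)ξ - A Y + α·S Y - α²η(Y)ξ, where η(Y) := g(Y,ξ). Then for every Y ∈ T, (R̄_N∘R_ξ - R_ξ∘R̄_N)(Y) = α·(A(S Y) - S(A Y)). In particular, R̄_N and R_ξ commute if and only if α·(A S - S A) = 0 on T. -/

import Mathlib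

noncomputable section

variable {V : Type*}

/-- The real inner product `g(x,y) = Re⟨x,y⟩` induced by the Hermitian inner product. -/
def g [NormedAddCommGroup V] [InnerProductSpace ℂ V] (x y : V) : ℝ := (inner ℂ x y : ℂ).re

/-- The normal Jacobi operator of an 𝔄-principal hypersurface:
`R̄_N Y = Y + 2η(Y)ξ + AY`. -/
def RNop [NormedAddCommGroup V] [InnerProductSpace ℂ V]
    (A : V →ₗ[ℝ] V) (ξ Y : V) : V :=
  Y + (2 * g Y ξ) • ξ + A Y

/-- The structure Jacobi operator of an 𝔄-principal Hopf hypersurface: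
`R_ξ Y = Y - 2η(Y)ξ - AY + α·SY - α²η(Y)ξ`. -/
def Rxiop [NormedAddCommGroup V] [InnerProductSpace ℂ V]
    (A S : V →ₗ[ℝ] V) (α : ℝ) (ξ Y : V) : V :=
  Y - (2 * g Y ξ) • ξ - A Y + α • S Y - (α ^ 2 * g Y ξ) • ξ

section glemmas
variable [NormedAddCommGroup V] [InnerProductSpace ℂ V]

lemma g_symm (x y : V) : g x y = g y x := by
  unfold g; exact inner_re_symm (𝕜 := ℂ) x y

lemma g_add_left (x y z : V) : g (x + y) z = g x z + g y z := by
  unfold g; rw [inner_add_left]; simp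

lemma g_add_right (x y z : V) : g x (y + z) = g x y + g x z := by
  unfold g; rw [inner_add_right]; simp

lemma g_sub_left (x y z : V) : g (x - y) z = g x z - g y z := by
  unfold g; rw [inner_sub_left]; simp

lemma g_sub_right (x y z : V) : g x (y - z) = g x y - g x z := by
  unfold g; rw [inner_sub_right]; simp

lemma g_neg_left (x y : V) : g (-x) y = - g x y := by
  unfold g; rw [inner_neg_left]; simp

lemma g_smul_left (r : ℝ) (x y : V) : g (r • x) y = r * g x y := by
  unfold g; rw [RCLike.real_smul_eq_coe_smul (K := ℂ), inner_smul_left]; simp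

lemma g_smul_right (r : ℝ) (x y : V) : g x (r • y) = r * g x y := by
  unfold g; rw [RCLike.real_smul_eq_coe_smul (K := ℂ), inner_smul_right]; simp

end glemmas

/-- If `AN = N` and `S` is a `g`-symmetric shape operator on `T = {Y : g(Y,N) = 0}` with
`Sξ = αξ`, then `(R̄_N∘R_ξ - R_ξ∘R̄_N)(Y) = α·(A(SY) - S(AY))` for all `Y ∈ T`; in
particular `R̄_N` and `R_ξ` commute on `T` iff `α·(AS - SA) = 0` on `T`. -/
theorem stmt_8 [NormedAddCommGroup V] [InnerProductSpace ℂ V]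
    (A : V →ₗ[ℝ] V)
    (hA_invol : ∀ x, A (A x) = x)
    (hA_antiJ : ∀ x, A (Complex.I • x) = -(Complex.I • A x))
    (hA_herm : ∀ x y, (inner ℂ (A x) (A y) : ℂ) = inner ℂ y x)
    (N : V) (hN : ‖N‖ = 1)
    (ξ : V) (hξ : ξ = -(Complex.I • N))
    (hAN : A N = N)
    (α : ℝ) (S : V →ₗ[ℝ] V)
    (hS_tan : ∀ Y : V, g Y N = 0 → g (S Y) N = 0)
    (hS_sym : ∀ X Y : V, g X N = 0 → g Y N = 0 → g (S X) Y = g X (S Y))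
    (hSξ : S ξ = α • ξ) :
    (∀ Y : V, g Y N = 0 →
      RNop A ξ (Rxiop A S α ξ Y) - Rxiop A S α ξ (RNop A ξ Y)
        = α • (A (S Y) - S (A Y))) ∧
    ((∀ Y : V, g Y N = 0 →
        RNop A ξ (Rxiop A S α ξ Y) = Rxiop A S α ξ (RNop A ξ Y)) ↔
      (∀ Y : V, g Y N = 0 → α • (A (S Y) - S (A Y)) = 0)) := by
  have hAξ : A ξ = -ξ := by
    rw [hξ, map_neg, hA_antiJ, hAN, neg_neg]
  have hNN : (inner ℂ N N : ℂ) = 1 := by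
    rw [inner_self_eq_norm_sq_to_K, hN]; norm_num
  have hgξξ : g ξ ξ = 1 := by
    unfold g
    rw [hξ, inner_neg_neg, inner_smul_left, inner_smul_right, hNN]
    simp [Complex.conj_I]
  have hgξN : g ξ N = 0 := by
    unfold g
    rw [hξ, inner_neg_left, inner_smul_left, hNN]
    simp [Complex.conj_I]
  have hgAξ : ∀ x : V, g (A x) ξ = - g x ξ := by
    intro x
    have h := hA_herm x ξ
    rw [hAξ, inner_neg_right] at h
    have h2 : (inner ℂ (A x) ξ : ℂ) = - inner ℂ ξ x := by linear_combination -h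
    unfold g
    have h3 := g_symm (V := V) ξ x
    unfold g at h3
    rw [h2, Complex.neg_re, h3]
  have hgSξ : ∀ Y : V, g Y N = 0 → g (S Y) ξ = α * g Y ξ := by
    intro Y hY
    rw [hS_sym Y ξ hY hgξN, hSξ, g_smul_right]
  have key1 : ∀ Y : V, g Y N = 0 →
      RNop A ξ (Rxiop A S α ξ Y) = α • S Y + α • A (S Y) := by
    intro Y hY
    simp only [RNop, Rxiop, map_add, map_sub, map_smul, hAξ, hA_invol,
      g_sub_left, g_add_left, g_smul_left, hgξξ, hgAξ, hgSξ Y hY]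
    module
  have key2 : ∀ Y : V, g Y N = 0 →
      Rxiop A S α ξ (RNop A ξ Y) = α • S Y + α • S (A Y) := by
    intro Y hY
    simp only [Rxiop, RNop, map_add, map_smul, hAξ, hSξ, hA_invol,
      g_add_left, g_smul_left, hgξξ, hgAξ, hgSξ Y hY]
    module
  have main : ∀ Y : V, g Y N = 0 →
      RNop A ξ (Rxiop A S α ξ Y) - Rxiop A S α ξ (RNop A ξ Y)
        = α • (A (S Y) - S (A Y)) := by
    intro Y hY
    rw [key1 Y hY, key2 Y hY, smul_sub]
    module
  refine ⟨main, ⟨fun h Y hY => by rw [← main Y hY, h Y hY, sub_self],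
    fun h Y hY => ?_⟩⟩
  have h1 := main Y hY
  rw [h Y hY] at h1
  exact sub_eq_zero.mp h1
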